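/- arXiv:2401.02354 — 3 statements merged into one kernel-verified Lean document; each statement's English description precedes it below -/
import Mathlib

section
/- Let C be a monoidal category, let (Z, β) be an object of the Drinfeld center Z(C), and let X be a retract of Z in C, i.e., there exist morphisms i : X ⟶ Z and p : Z ⟶ X with i ≫ p = id_X. Then X is Galois trivial. Consequently, a Galois nontrivial object X cannot be a retract of the underlying object of any object of the Drinfeld center. (In the paper C is a fusion category, where every monomorphism splits, so this says that the underlying object of an object of Z(C) cannot have a Galois nontrivial subobject.) -/
open CategoryTheory MonoidalCategory

variable {C : Type*} [Category C] [MonoidalCategory C]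

/-- The left embedding `λ_X : End(𝟙) → End(X)`,
`e ↦ ℓ_X ∘ (e ⊗ id_X) ∘ ℓ_X⁻¹`. -/
def leftEmbed (X : C) (e : 𝟙_ C ⟶ 𝟙_ C) : X ⟶ X :=
  (λ_ X).inv ≫ (e ▷ X) ≫ (λ_ X).hom

/-- The right embedding `ρ_X : End(𝟙) → End(X)`,
`e ↦ r_X ∘ (id_X ⊗ e) ∘ r_X⁻¹`. -/
def rightEmbed (X : C) (e : 𝟙_ C ⟶ 𝟙_ C) : X ⟶ X :=
  (ρ_ X).inv ≫ (X ◁ e) ≫ (ρ_ X).hom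

/-- `X` is Galois trivial if the left and right embeddings agree on it. -/
def GaloisTrivial (X : C) : Prop :=
  ∀ e : 𝟙_ C ⟶ 𝟙_ C, leftEmbed X e = rightEmbed X e


lemma beta_unit (Z : CategoryTheory.Center C) :
    (Z.2.β (𝟙_ C)).hom = (ρ_ Z.1).hom ≫ (λ_ Z.1).inv := by
  have h : (β_ Z (𝟙_ (CategoryTheory.Center C))).hom.f =
      ((ρ_ Z).hom ≫ (λ_ Z).inv : Z ⊗ 𝟙_ (CategoryTheory.Center C) ⟶ 𝟙_ (CategoryTheory.Center C) ⊗ Z).f := by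
    rw [braiding_tensorUnit_right]
  rw [show (β_ Z (𝟙_ (CategoryTheory.Center C))).hom =
        (Z.braiding (𝟙_ (CategoryTheory.Center C))).hom from rfl,
    Center.braiding_hom_f, Center.comp_f, Center.rightUnitor_hom_f,
    Center.leftUnitor_inv_f] at h
  exact h

lemma center_trivial (Z : CategoryTheory.Center C) : GaloisTrivial Z.1 := by
  intro e
  have nat := Z.2.naturality e
  rw [beta_unit] at nat
  simp only [leftEmbed, rightEmbed]
  have : (e ▷ Z.1) = (λ_ Z.1).hom ≫ (ρ_ Z.1).inv ≫ (Z.1 ◁ e) ≫ (ρ_ Z.1).hom ≫ (λ_ Z.1).inv := by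
    rw [← IsIso.inv_comp_eq] at nat
    rw [← nat]
    simp
  rw [this]; simp

lemma leftEmbed_natural {X Y : C} (f : X ⟶ Y) (e : 𝟙_ C ⟶ 𝟙_ C) :
    f ≫ leftEmbed Y e = leftEmbed X e ≫ f := by
  simp only [leftEmbed]
  rw [leftUnitor_inv_naturality_assoc, whisker_exchange_assoc, leftUnitor_naturality]
  simp [Category.assoc]

lemma rightEmbed_natural {X Y : C} (f : X ⟶ Y) (e : 𝟙_ C ⟶ 𝟙_ C) :
    f ≫ rightEmbed Y e = rightEmbed X e ≫ f := by
  simp only [rightEmbed]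
  rw [rightUnitor_inv_naturality_assoc, ← whisker_exchange_assoc, rightUnitor_naturality]
  simp [Category.assoc]

/-- A retract in `C` of the underlying object of an object of the Drinfeld center
is Galois trivial; equivalently, a Galois nontrivial object cannot be a retract
(in particular, in a fusion category, a subobject) of the underlying object of an
object of `Z(C)`. -/
theorem stmt4 (Z : CategoryTheory.Center C) (X : C)
    (i : X ⟶ Z.1) (p : Z.1 ⟶ X) (hip : i ≫ p = 𝟙 X) : GaloisTrivial X := by
  intro e
  have h1 : leftEmbed X e = i ≫ leftEmbed Z.1 e ≫ p := by
    rw [← Category.assoc, leftEmbed_natural, Category.assoc, hip, Category.comp_id]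
  have h2 : rightEmbed X e = i ≫ rightEmbed Z.1 e ≫ p := by
    rw [← Category.assoc, rightEmbed_natural, Category.assoc, hip, Category.comp_id]
  rw [h1, h2, center_trivial Z e]
end

section
/- Let A = ι →₀ ℕ be a transitive finite-rank ℕSet algebra. Then there exists exactly one function φ : (ι →₀ ℕ) → ℝ that is additive (φ(a + b) = φ(a) + φ(b)), multiplicative (φ(a * b) = φ(a)·φ(b)), unital (φ(1) = 1), and satisfies φ(e_i) ≥ 0 for all i ∈ ι; moreover, this unique φ in fact satisfies φ(e_i) > 0 for every i ∈ ι. -/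
open Finsupp

/-- An ℕSet algebra: an associative multiplication on the free commutative monoid
`ι →₀ ℕ`, additive in each argument, with a two-sided unit. -/
structure NSetAlgebra (ι : Type*) where
  mul : (ι →₀ ℕ) → (ι →₀ ℕ) → (ι →₀ ℕ)
  one : ι →₀ ℕ
  mul_assoc : ∀ a b c, mul (mul a b) c = mul a (mul b c)
  one_mul : ∀ a, mul one a = a
  mul_one : ∀ a, mul a one = a
  left_distrib : ∀ a b c, mul a (b + c) = mul a b + mul a c
  right_distrib : ∀ a b c, mul (a + b) c = mul a c + mul b c
  zero_mul : ∀ a, mul 0 a = 0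
  mul_zero : ∀ a, mul a 0 = 0

namespace NSetAlgebra

variable {ι : Type*}

/-- The structure constants `N(i,j,k) = (e_i * e_j)(k)`. -/
noncomputable def N (A : NSetAlgebra ι) (i j k : ι) : ℕ :=
  A.mul (Finsupp.single i 1) (Finsupp.single j 1) k

/-- Transitivity: for all simple `i, j` there are `u, v` with
`e_j ≤ e_u * e_i` and `e_j ≤ e_i * e_v`. -/
def Transitive (A : NSetAlgebra ι) : Prop :=
  ∀ i j : ι, (∃ u, Finsupp.single j 1 ≤ A.mul (Finsupp.single u 1) (Finsupp.single i 1)) ∧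
             (∃ v, Finsupp.single j 1 ≤ A.mul (Finsupp.single i 1) (Finsupp.single v 1))

/-- A Frobenius–Perron character: additive, multiplicative, unital,
and strictly positive on simple elements. -/
structure IsFPCharacter (A : NSetAlgebra ι) (φ : (ι →₀ ℕ) → ℝ) : Prop where
  map_add : ∀ a b, φ (a + b) = φ a + φ b
  map_mul : ∀ a b, φ (A.mul a b) = φ a * φ b
  map_one : φ A.one = 1
  pos : ∀ i, 0 < φ (Finsupp.single i 1)

/-- The ℝ-bilinear extension of the multiplication to vectors `ι → ℝ`:
`(r ⋆ s)(k) = ∑ i j, r i * s j * N i j k`. -/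
noncomputable def starMul [Fintype ι] (A : NSetAlgebra ι) (r s : ι → ℝ) : ι → ℝ :=
  fun k => ∑ i : ι, ∑ j : ι, r i * s j * (A.N i j k : ℝ)

/-- A fusion semiring structure: an involution `σ` such that for all simples `i, j`,
`j = σ i` iff there is a unique simple `k` with `e_k ≤ 1 ∩ (e_i * e_j)`,
iff there is a unique simple `k` with `e_k ≤ 1 ∩ (e_j * e_i)`. -/
structure IsFusionSemiring (A : NSetAlgebra ι) (σ : ι → ι) : Prop where
  involutive : ∀ i, σ (σ i) = i
  dual_iff : ∀ i j : ι,
    (∃! k, Finsupp.single k 1 ≤ A.one ∧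
        Finsupp.single k 1 ≤ A.mul (Finsupp.single i 1) (Finsupp.single j 1)) ↔ j = σ i
  dual_iff' : ∀ i j : ι,
    (∃! k, Finsupp.single k 1 ≤ A.one ∧
        Finsupp.single k 1 ≤ A.mul (Finsupp.single j 1) (Finsupp.single i 1)) ↔ j = σ i

/-- A regular element: a strictly positive vector `R` with `e_i ⋆ R = φ(e_i) • R`
for every simple `i`. -/
noncomputable def IsRegular [Fintype ι] (A : NSetAlgebra ι) (φ : (ι →₀ ℕ) → ℝ)
    (R : ι → ℝ) : Prop :=
  (∀ i, 0 < R i) ∧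
  ∀ i : ι, A.starMul (fun k => ((Finsupp.single i 1 : ι →₀ ℕ) k : ℝ)) R
    = φ (Finsupp.single i 1) • R

end NSetAlgebra

/-- The real vector underlying an element of `ι →₀ ℕ`. -/
def toRealVec {ι : Type*} (a : ι →₀ ℕ) : ι → ℝ := fun k => (a k : ℝ)

/-- The ℝ-linear extension of an additive map `(ι →₀ ℕ) → (κ →₀ ℕ)` to vectors. -/
noncomputable def linExt {ι κ : Type*} [Fintype ι]
    (f : (ι →₀ ℕ) → (κ →₀ ℕ)) (r : ι → ℝ) : κ → ℝ :=
  fun x => ∑ i : ι, r i * (f (Finsupp.single i 1) x : ℝ)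


lemma perron_simple {ι : Type*} [Fintype ι] [Nonempty ι] {P : ι → ι → ℝ}
    (hP : ∀ k j, 0 < P k j) {lam : ℝ} {R w : ι → ℝ}
    (hR : ∀ k, 0 < R k) (hRe : ∀ k, ∑ j, P k j * R j = lam * R k)
    (hw : ∀ k, 0 ≤ w k) (hwe : ∀ k, ∑ j, P k j * w j = lam * w k) :
    ∃ t, 0 ≤ t ∧ ∀ k, w k = t * R k := by
  obtain ⟨k₀, -, hk₀⟩ := Finset.exists_min_image Finset.univ (fun k => w k / R k)
    ⟨Classical.arbitrary ι, Finset.mem_univ _⟩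
  set t := w k₀ / R k₀ with ht
  have htnn : 0 ≤ t := div_nonneg (hw k₀) (hR k₀).le
  have hle : ∀ k, t * R k ≤ w k := by
    intro k
    rw [← le_div_iff₀ (hR k)]
    exact hk₀ k (Finset.mem_univ k)
  set u : ι → ℝ := fun k => w k - t * R k with hu
  have hunn : ∀ k, 0 ≤ u k := fun k => sub_nonneg.2 (hle k)
  have huk₀ : u k₀ = 0 := by
    simp only [hu, ht]
    rw [div_mul_cancel₀ _ (hR k₀).ne', sub_self]
  have hue : ∑ j, P k₀ j * u j = 0 := by
    have : ∑ j, P k₀ j * u j = (∑ j, P k₀ j * w j) - t * ∑ j, P k₀ j * R j := by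
      rw [Finset.mul_sum, ← Finset.sum_sub_distrib]
      congr 1; ext j; simp only [hu]; ring
    rw [this, hRe, hwe]
    rw [show lam * w k₀ - t * (lam * R k₀) = lam * u k₀ by simp only [hu]; ring, huk₀, mul_zero]
  have hz : ∀ j, u j = 0 := by
    intro j
    have := (Finset.sum_eq_zero_iff_of_nonneg
      (fun j _ => mul_nonneg (hP k₀ j).le (hunn j))).1 hue j (Finset.mem_univ j)
    rcases mul_eq_zero.1 this with h | h
    · exact absurd h (hP k₀ j).ne'
    · exact h
  exact ⟨t, htnn, fun k => by have := hz k; simp only [hu] at this; linarith⟩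

lemma perron_exists {ι : Type*} [Fintype ι] [Nonempty ι] (P : ι → ι → ℝ)
    (hP : ∀ k j, 0 < P k j) :
    ∃ (lam : ℝ) (v : ι → ℝ), 0 < lam ∧ (∀ k, 0 < v k) ∧
      ∀ k, ∑ j, P k j * v j = lam * v k := by
  classical
  set K : Set ((ι → ℝ) × ℝ) :=
    {p | (∀ k, 0 ≤ p.1 k) ∧ (∑ k, p.1 k = 1) ∧ 0 ≤ p.2 ∧
      ∀ k, p.2 * p.1 k ≤ ∑ j, P k j * p.1 j} with hK
  -- closedness
  have hKclosed : IsClosed K := by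
    have c1 : ∀ k : ι, Continuous fun p : (ι → ℝ) × ℝ => p.1 k :=
      fun k => (continuous_apply k).comp continuous_fst
    have h1 : IsClosed {p : (ι → ℝ) × ℝ | ∀ k, 0 ≤ p.1 k} := by
      rw [Set.setOf_forall]
      exact isClosed_iInter fun k => isClosed_le continuous_const (c1 k)
    have h2 : IsClosed {p : (ι → ℝ) × ℝ | ∑ k, p.1 k = 1} :=
      isClosed_eq (by continuity) continuous_const
    have h3 : IsClosed {p : (ι → ℝ) × ℝ | 0 ≤ p.2} :=
      isClosed_le continuous_const continuous_snd
    have h4 : IsClosed {p : (ι → ℝ) × ℝ | ∀ k, p.2 * p.1 k ≤ ∑ j, P k j * p.1 j} := by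
      rw [Set.setOf_forall]
      exact isClosed_iInter fun k => isClosed_le (continuous_snd.mul (c1 k)) (by continuity)
    rw [hK, Set.setOf_and, Set.setOf_and, Set.setOf_and]
    exact h1.inter (h2.inter (h3.inter h4))
  -- compactness
  set C : ℝ := ∑ k : ι, ∑ j : ι, P k j with hC
  have hKsub : K ⊆ Set.Icc (0 : ι → ℝ) 1 ×ˢ Set.Icc (0 : ℝ) C := by
    rintro ⟨v, t⟩ ⟨hvnn, hvsum, htnn, hvt⟩
    have hv1 : ∀ k, v k ≤ 1 := by
      intro k
      calc v k ≤ ∑ j, v j := Finset.single_le_sum (fun j _ => hvnn j) (Finset.mem_univ k)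
        _ = 1 := hvsum
    constructor
    · exact ⟨fun k => hvnn k, fun k => hv1 k⟩
    · refine ⟨htnn, ?_⟩
      calc t = t * ∑ k, v k := by rw [hvsum, mul_one]
        _ = ∑ k, t * v k := Finset.mul_sum _ _ _
        _ ≤ ∑ k, ∑ j, P k j * v j := Finset.sum_le_sum fun k _ => hvt k
        _ ≤ C := Finset.sum_le_sum fun k _ => Finset.sum_le_sum fun j _ => by
            have := hP k j
            nlinarith [hvnn j, hv1 j]
  have hKcomp : IsCompact K :=
    ((isCompact_Icc).prod (isCompact_Icc)).of_isClosed_subset hKclosed hKsub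
  -- nonemptiness
  have hcard : (0 : ℝ) < (Fintype.card ι : ℝ) := by
    exact_mod_cast Fintype.card_pos
  set c : ℝ := (Fintype.card ι : ℝ)⁻¹ with hc
  have hcpos : 0 < c := inv_pos.2 hcard
  set t₀ : ℝ := Finset.univ.inf' Finset.univ_nonempty (fun k => ∑ j, P k j) with ht₀
  have ht₀pos : 0 < t₀ := by
    rw [ht₀, Finset.lt_inf'_iff]
    exact fun k _ => Finset.sum_pos (fun j _ => hP k j) Finset.univ_nonempty
  have hmem₀ : ((fun _ => c, t₀) : (ι → ℝ) × ℝ) ∈ K := by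
    refine ⟨fun _ => hcpos.le, ?_, ht₀pos.le, ?_⟩
    · simp only [Finset.sum_const, Finset.card_univ, nsmul_eq_mul, hc]
      field_simp
    · intro k
      have h1 : t₀ ≤ ∑ j, P k j := Finset.inf'_le _ (Finset.mem_univ k)
      calc t₀ * c ≤ (∑ j, P k j) * c := by nlinarith
        _ = ∑ j, P k j * c := by rw [Finset.sum_mul]
  -- maximum
  obtain ⟨⟨v, lam⟩, hmem, hmax⟩ := hKcomp.exists_isMaxOn ⟨_, hmem₀⟩
    (continuous_snd.continuousOn)
  obtain ⟨hvnn, hvsum, hlamnn, hvle⟩ := hmem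
  have hlam : t₀ ≤ lam := hmax hmem₀
  have hlampos : 0 < lam := lt_of_lt_of_le ht₀pos hlam
  -- v is nonzero somewhere
  have hj₀ : ∃ j₀, 0 < v j₀ := by
    by_contra h
    push_neg at h
    have : ∑ k, v k = 0 := Finset.sum_eq_zero fun k _ => le_antisymm (h k) (hvnn k)
    rw [hvsum] at this
    norm_num at this
  obtain ⟨j₀, hj₀⟩ := hj₀
  set w : ι → ℝ := fun k => ∑ j, P k j * v j with hw
  have hwpos : ∀ k, 0 < w k :=
    fun k => Finset.sum_pos' (fun j _ => mul_nonneg (hP k j).le (hvnn j))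
      ⟨j₀, Finset.mem_univ j₀, mul_pos (hP k j₀) hj₀⟩
  -- eigen equation by contradiction
  have heig : ∀ k, w k = lam * v k := by
    by_contra h
    push_neg at h
    obtain ⟨k₀, hk₀⟩ := h
    have hk₀' : lam * v k₀ < w k₀ := lt_of_le_of_ne (hvle k₀) (Ne.symm hk₀)
    have hstrict : ∀ k, lam * w k < ∑ j, P k j * w j := by
      intro k
      have : ∑ j, P k j * (lam * v j) < ∑ j, P k j * w j := by
        refine Finset.sum_lt_sum (fun j _ => ?_) ⟨k₀, Finset.mem_univ k₀, ?_⟩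
        · exact mul_le_mul_of_nonneg_left (hvle j) (hP k j).le
        · exact mul_lt_mul_of_pos_left hk₀' (hP k k₀)
      calc lam * w k = ∑ j, P k j * (lam * v j) := by
            rw [hw, Finset.mul_sum]; congr 1; ext j; ring
        _ < ∑ j, P k j * w j := this
    set μ : ℝ := Finset.univ.inf' Finset.univ_nonempty
      (fun k => (∑ j, P k j * w j) / w k) with hμ
    have hlamμ : lam < μ := by
      rw [hμ, Finset.lt_inf'_iff]
      intro k _
      rw [lt_div_iff₀ (hwpos k)]
      calc lam * w k < ∑ j, P k j * w j := hstrict k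
        _ = _ := rfl
    have hμle : ∀ k, μ * w k ≤ ∑ j, P k j * w j := by
      intro k
      have := Finset.inf'_le (fun k => (∑ j, P k j * w j) / w k) (Finset.mem_univ k)
      rw [← hμ] at this
      rw [← le_div_iff₀ (hwpos k)]
      exact this
    set S : ℝ := ∑ k, w k with hS
    have hSpos : 0 < S := Finset.sum_pos (fun k _ => hwpos k) Finset.univ_nonempty
    have hmem₁ : ((fun k => w k / S, μ) : (ι → ℝ) × ℝ) ∈ K := by
      refine ⟨fun k => div_nonneg (hwpos k).le hSpos.le, ?_, le_trans hlamnn hlamμ.le, ?_⟩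
      · rw [← Finset.sum_div, ← hS, div_self hSpos.ne']
      · intro k
        have h1 : μ * w k ≤ ∑ j, P k j * w j := hμle k
        calc μ * (w k / S) = (μ * w k) / S := by ring
          _ ≤ (∑ j, P k j * w j) / S := div_le_div_of_nonneg_right h1 hSpos.le
          _ = ∑ j, P k j * (w j / S) := by rw [Finset.sum_div]; congr 1; ext j; ring
    have := hmax hmem₁
    simp only at this
    exact absurd this (not_le.2 hlamμ)
  have hvpos : ∀ k, 0 < v k := by
    intro k
    rcases lt_or_eq_of_le (hvnn k) with h | h
    · exact h
    · exfalso
      have := heig k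
      rw [show v k = (v, lam).1 k from rfl, ← h, mul_zero] at this
      exact (hwpos k).ne' this
  exact ⟨lam, v, hlampos, hvpos, heig⟩
section Aux

set_option linter.unusedSectionVars false

variable {ι : Type*} [Fintype ι]

lemma Finsupp.sum_single_eq (a : ι →₀ ℕ) : ∑ k : ι, Finsupp.single k (a k) = a := by
  classical
  ext m
  rw [Finsupp.finset_sum_apply]
  simp only [Finsupp.single_apply]
  rw [Finset.sum_ite_eq' Finset.univ m (fun k => a k)]
  simp

namespace NSetAlgebra

variable (A : NSetAlgebra ι)

lemma mul_sum_right {α : Type*} (s : Finset α) (f : α → (ι →₀ ℕ)) (b : ι →₀ ℕ) :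
    A.mul (∑ x ∈ s, f x) b = ∑ x ∈ s, A.mul (f x) b := by
  classical
  induction s using Finset.induction with
  | empty => simp [A.zero_mul]
  | insert _ _ h ih => rw [Finset.sum_insert h, A.right_distrib, ih, Finset.sum_insert h]

lemma mul_sum_left {α : Type*} (s : Finset α) (f : α → (ι →₀ ℕ)) (b : ι →₀ ℕ) :
    A.mul b (∑ x ∈ s, f x) = ∑ x ∈ s, A.mul b (f x) := by
  classical
  induction s using Finset.induction with
  | empty => simp [A.mul_zero]
  | insert _ _ h ih => rw [Finset.sum_insert h, A.left_distrib, ih, Finset.sum_insert h]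

lemma mul_nsmul_right (n : ℕ) (a b : ι →₀ ℕ) :
    A.mul (n • a) b = n • A.mul a b := by
  induction n with
  | zero => simp [A.zero_mul]
  | succ n ih => rw [succ_nsmul, succ_nsmul, A.right_distrib, ih]

lemma mul_nsmul_left (n : ℕ) (a b : ι →₀ ℕ) :
    A.mul b (n • a) = n • A.mul b a := by
  induction n with
  | zero => simp [A.mul_zero]
  | succ n ih => rw [succ_nsmul, succ_nsmul, A.left_distrib, ih]

lemma coeff_mul (a b : ι →₀ ℕ) (m : ι) :
    (A.mul a b) m = ∑ i : ι, ∑ j : ι, a i * b j * A.N i j m := by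
  conv_lhs => rw [← Finsupp.sum_single_eq a, ← Finsupp.sum_single_eq b]
  rw [A.mul_sum_right, Finsupp.finset_sum_apply]
  refine Finset.sum_congr rfl fun i _ => ?_
  rw [A.mul_sum_left, Finsupp.finset_sum_apply]
  refine Finset.sum_congr rfl fun j _ => ?_
  have h1 : Finsupp.single i (a i) = a i • Finsupp.single i (1 : ℕ) := by
    rw [Finsupp.smul_single, smul_eq_mul, _root_.mul_one]
  have h2 : Finsupp.single j (b j) = b j • Finsupp.single j (1 : ℕ) := by
    rw [Finsupp.smul_single, smul_eq_mul, _root_.mul_one]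
  rw [h1, h2, A.mul_nsmul_right, A.mul_nsmul_left, Finsupp.smul_apply, Finsupp.smul_apply,
    smul_eq_mul, smul_eq_mul, N]
  ring

lemma coeff_mul_single_right (a : ι →₀ ℕ) (j m : ι) :
    (A.mul a (Finsupp.single j 1)) m = ∑ i : ι, a i * A.N i j m := by
  rw [coeff_mul]
  refine Finset.sum_congr rfl fun i _ => ?_
  rw [Finset.sum_eq_single j]
  · simp
  · intro j' _ hj'
    simp [Finsupp.single_apply, Ne.symm hj']
  · simp

lemma coeff_mul_single_left (b : ι →₀ ℕ) (i m : ι) :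
    (A.mul (Finsupp.single i 1) b) m = ∑ j : ι, b j * A.N i j m := by
  rw [coeff_mul]
  rw [Finset.sum_eq_single i]
  · refine Finset.sum_congr rfl fun j _ => by simp
  · intro i' _ hi'
    apply Finset.sum_eq_zero
    intro j _
    simp [Finsupp.single_apply, Ne.symm hi']
  · simp

lemma assocN (i j l m : ι) :
    ∑ k : ι, A.N i j k * A.N k l m = ∑ k : ι, A.N j l k * A.N i k m := by
  have h1 : (A.mul (A.mul (Finsupp.single i 1) (Finsupp.single j 1)) (Finsupp.single l 1)) m
      = ∑ k : ι, A.N i j k * A.N k l m := by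
    rw [coeff_mul_single_right]
    rfl
  have h2 : (A.mul (Finsupp.single i 1) (A.mul (Finsupp.single j 1) (Finsupp.single l 1))) m
      = ∑ k : ι, A.N j l k * A.N i k m := by
    rw [coeff_mul_single_left]
    rfl
  rw [← h1, ← h2, A.mul_assoc]

end NSetAlgebra

end Aux
section Char

set_option linter.unusedSectionVars false

variable {ι : Type*} [Fintype ι] (A : NSetAlgebra ι)

lemma phi_zero (φ : (ι →₀ ℕ) → ℝ) (hadd : ∀ a b, φ (a + b) = φ a + φ b) : φ 0 = 0 := by
  have := hadd 0 0
  simp at this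
  linarith

lemma phi_sum (φ : (ι →₀ ℕ) → ℝ) (hadd : ∀ a b, φ (a + b) = φ a + φ b)
    {α : Type*} (s : Finset α) (f : α → (ι →₀ ℕ)) :
    φ (∑ x ∈ s, f x) = ∑ x ∈ s, φ (f x) := by
  classical
  induction s using Finset.induction with
  | empty => simpa using phi_zero φ hadd
  | insert _ _ h ih => rw [Finset.sum_insert h, hadd, ih, Finset.sum_insert h]

lemma phi_eq (φ : (ι →₀ ℕ) → ℝ) (hadd : ∀ a b, φ (a + b) = φ a + φ b) (a : ι →₀ ℕ) :
    φ a = ∑ k : ι, (a k : ℝ) * φ (Finsupp.single k 1) := by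
  have hsingle : ∀ (k : ι) (n : ℕ), φ (Finsupp.single k n) = n * φ (Finsupp.single k 1) := by
    intro k n
    induction n with
    | zero => simpa using phi_zero φ hadd
    | succ n ih =>
        have : Finsupp.single k (n + 1) = Finsupp.single k n + Finsupp.single k 1 := by
          rw [← Finsupp.single_add]
        rw [this, hadd, ih]
        push_cast
        ring
  conv_lhs => rw [← Finsupp.sum_single_eq a]
  rw [phi_sum φ hadd]
  exact Finset.sum_congr rfl fun k _ => hsingle k (a k)

lemma char_rel (φ : (ι →₀ ℕ) → ℝ) (hadd : ∀ a b, φ (a + b) = φ a + φ b)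
    (hmul : ∀ a b, φ (A.mul a b) = φ a * φ b) (i j : ι) :
    φ (Finsupp.single i 1) * φ (Finsupp.single j 1)
      = ∑ k : ι, (A.N i j k : ℝ) * φ (Finsupp.single k 1) := by
  rw [← hmul, phi_eq φ hadd]
  rfl

lemma char_pos (hA : A.Transitive) (φ : (ι →₀ ℕ) → ℝ)
    (hadd : ∀ a b, φ (a + b) = φ a + φ b)
    (hmul : ∀ a b, φ (A.mul a b) = φ a * φ b)
    (hone : φ A.one = 1)
    (hnn : ∀ i : ι, 0 ≤ φ (Finsupp.single i 1)) :
    ∀ i : ι, 0 < φ (Finsupp.single i 1) := by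
  classical
  set d : ι → ℝ := fun k => φ (Finsupp.single k 1) with hd
  have hLpos : ∀ k j : ι, (0 : ℝ) < ∑ i : ι, (A.N i j k : ℝ) := by
    intro k j
    obtain ⟨u, hu⟩ := (hA j k).1
    have : (1 : ℕ) ≤ A.N u j k := by
      have := hu k
      rwa [Finsupp.single_eq_same] at this
    refine Finset.sum_pos' (fun i _ => by positivity) ⟨u, Finset.mem_univ u, ?_⟩
    exact_mod_cast this
  have hsum1 : ∑ k : ι, (A.one k : ℝ) * d k = 1 := by
    rw [← phi_eq φ hadd, hone]
  have hk₀ : ∃ k₀, 0 < d k₀ := by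
    by_contra h
    push_neg at h
    have : ∀ k, d k = 0 := fun k => le_antisymm (h k) (hnn k)
    rw [Finset.sum_eq_zero (fun k _ => by rw [this k, mul_zero])] at hsum1
    norm_num at hsum1
  obtain ⟨k₀, hk₀⟩ := hk₀
  have hrel : ∀ j : ι, (∑ i : ι, d i) * d j = ∑ k : ι, (∑ i : ι, (A.N i j k : ℝ)) * d k := by
    intro j
    rw [Finset.sum_mul]
    rw [show ∑ i : ι, d i * d j = ∑ i : ι, ∑ k : ι, (A.N i j k : ℝ) * d k from
      Finset.sum_congr rfl fun i _ => char_rel A φ hadd hmul i j]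
    rw [Finset.sum_comm]
    exact Finset.sum_congr rfl fun k _ => by rw [Finset.sum_mul]
  intro j
  have hpos : 0 < (∑ i : ι, d i) * d j := by
    rw [hrel j]
    refine Finset.sum_pos' (fun k _ => mul_nonneg (hLpos k j).le (hnn k)) ?_
    exact ⟨k₀, Finset.mem_univ k₀, mul_pos (hLpos k₀ j) hk₀⟩
  rcases lt_or_eq_of_le (hnn j) with h | h
  · exact h
  · exfalso
    have hdj : d j = 0 := h.symm
    rw [hdj, mul_zero] at hpos
    exact lt_irrefl 0 hpos

end Char
section Exist

set_option linter.unusedSectionVars false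

variable {ι : Type*} [Fintype ι] [Nonempty ι] (A : NSetAlgebra ι)

lemma exists_char (hA : A.Transitive) :
    ∃ d : ι → ℝ, (∀ i, 0 ≤ d i) ∧
      (∀ i j, d i * d j = ∑ k : ι, (A.N i j k : ℝ) * d k) ∧
      (∑ k : ι, (A.one k : ℝ) * d k = 1) := by
  classical
  set Nr : ι → ι → ι → ℝ := fun i j k => (A.N i j k : ℝ) with hNr
  have hNrnn : ∀ i j k, 0 ≤ Nr i j k := fun i j k => Nat.cast_nonneg _
  -- the right-multiplication-by-X matrix
  set B : ι → ι → ℝ := fun k j => ∑ v : ι, Nr j v k with hB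
  have hBpos : ∀ k j, 0 < B k j := by
    intro k j
    obtain ⟨v, hv⟩ := (hA j k).2
    have h1 : (1 : ℕ) ≤ A.N j v k := by
      have := hv k
      rwa [Finsupp.single_eq_same] at this
    refine Finset.sum_pos' (fun v _ => hNrnn _ _ _) ⟨v, Finset.mem_univ v, ?_⟩
    simp only [hNr]
    exact_mod_cast h1
  obtain ⟨lam, R, hlam, hR, hRe⟩ := perron_exists B hBpos
  -- real associativity
  have assocNr : ∀ i j l m : ι,
      ∑ k : ι, Nr i j k * Nr k l m = ∑ k : ι, Nr j l k * Nr i k m := by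
    intro i j l m
    simp only [hNr]
    have h2 := congrArg (fun n : ℕ => (n : ℝ)) (A.assocN i j l m)
    push_cast at h2
    exact h2
  -- left multiplication commutes with B, so M_i R is a λ-eigenvector of B
  have hcomm : ∀ i : ι, ∀ k : ι,
      ∑ j : ι, B k j * (∑ l : ι, Nr i l j * R l) = lam * ∑ j : ι, Nr i j k * R j := by
    intro i k
    have step1 : ∑ j : ι, B k j * (∑ l : ι, Nr i l j * R l)
        = ∑ l : ι, (∑ v : ι, (∑ j : ι, Nr i l j * Nr j v k)) * R l := by
      simp only [hB, Finset.sum_mul, Finset.mul_sum]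
      rw [Finset.sum_comm]
      refine Finset.sum_congr rfl fun l _ => ?_
      rw [Finset.sum_comm]
      refine Finset.sum_congr rfl fun v _ => ?_
      refine Finset.sum_congr rfl fun j _ => by ring
    have step2 : ∑ l : ι, (∑ v : ι, (∑ j : ι, Nr i l j * Nr j v k)) * R l
        = ∑ l : ι, (∑ v : ι, (∑ j : ι, Nr l v j * Nr i j k)) * R l := by
      refine Finset.sum_congr rfl fun l _ => ?_
      congr 1
      exact Finset.sum_congr rfl fun v _ => assocNr i l v k
    have step3 : ∑ l : ι, (∑ v : ι, (∑ j : ι, Nr l v j * Nr i j k)) * R l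
        = ∑ j : ι, Nr i j k * (∑ l : ι, B j l * R l) := by
      calc ∑ l : ι, (∑ v : ι, (∑ j : ι, Nr l v j * Nr i j k)) * R l
          = ∑ l : ι, ∑ v : ι, ∑ j : ι, Nr l v j * Nr i j k * R l := by
            refine Finset.sum_congr rfl fun l _ => ?_
            rw [Finset.sum_mul]
            refine Finset.sum_congr rfl fun v _ => ?_
            rw [Finset.sum_mul]
        _ = ∑ l : ι, ∑ j : ι, ∑ v : ι, Nr l v j * Nr i j k * R l := by
            refine Finset.sum_congr rfl fun l _ => Finset.sum_comm
        _ = ∑ j : ι, ∑ l : ι, ∑ v : ι, Nr l v j * Nr i j k * R l := Finset.sum_comm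
        _ = ∑ j : ι, Nr i j k * (∑ l : ι, B j l * R l) := by
            refine Finset.sum_congr rfl fun j _ => ?_
            simp only [hB]
            rw [Finset.mul_sum]
            refine Finset.sum_congr rfl fun l _ => ?_
            simp only [Finset.sum_mul, Finset.mul_sum]
            refine Finset.sum_congr rfl fun v _ => by ring
    rw [step1, step2, step3]
    rw [Finset.mul_sum]
    refine Finset.sum_congr rfl fun j _ => ?_
    rw [hRe j]
    ring
  -- extract the eigenvalue d i
  have hdi : ∀ i : ι, ∃ t : ℝ, 0 ≤ t ∧ ∀ k, (∑ j : ι, Nr i j k * R j) = t * R k := by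
    intro i
    refine perron_simple hBpos hR hRe (fun k => ?_) (fun k => hcomm i k)
    exact Finset.sum_nonneg fun j _ => mul_nonneg (hNrnn _ _ _) (hR j).le
  choose d hd0 hdR using hdi
  have k₁ : ι := Classical.arbitrary ι
  refine ⟨d, hd0, ?_, ?_⟩
  · -- multiplicativity
    intro i j
    have key : ∀ k : ι, (d i * d j) * R k = (∑ p : ι, Nr i j p * d p) * R k := by
      intro k
      have e1 : ∑ l : ι, Nr i l k * (∑ m : ι, Nr j m l * R m) = (d i * d j) * R k := by
        calc ∑ l : ι, Nr i l k * (∑ m : ι, Nr j m l * R m)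
            = ∑ l : ι, Nr i l k * (d j * R l) := by
              refine Finset.sum_congr rfl fun l _ => by rw [hdR j l]
          _ = d j * ∑ l : ι, Nr i l k * R l := by
              rw [Finset.mul_sum]; exact Finset.sum_congr rfl fun l _ => by ring
          _ = d j * (d i * R k) := by rw [hdR i k]
          _ = (d i * d j) * R k := by ring
      have e2 : ∑ l : ι, Nr i l k * (∑ m : ι, Nr j m l * R m)
          = (∑ p : ι, Nr i j p * d p) * R k := by
        calc ∑ l : ι, Nr i l k * (∑ m : ι, Nr j m l * R m)
            = ∑ m : ι, (∑ l : ι, Nr j m l * Nr i l k) * R m := by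
              simp only [Finset.mul_sum, Finset.sum_mul]
              rw [Finset.sum_comm]
              refine Finset.sum_congr rfl fun m _ => ?_
              refine Finset.sum_congr rfl fun l _ => by ring
          _ = ∑ m : ι, (∑ p : ι, Nr i j p * Nr p m k) * R m := by
              refine Finset.sum_congr rfl fun m _ => by rw [← assocNr i j m k]
          _ = ∑ p : ι, Nr i j p * (∑ m : ι, Nr p m k * R m) := by
              simp only [Finset.mul_sum, Finset.sum_mul]
              rw [Finset.sum_comm]
              refine Finset.sum_congr rfl fun p _ => ?_
              refine Finset.sum_congr rfl fun m _ => by ring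
          _ = ∑ p : ι, Nr i j p * (d p * R k) := by
              refine Finset.sum_congr rfl fun p _ => by rw [hdR p k]
          _ = (∑ p : ι, Nr i j p * d p) * R k := by
              rw [Finset.sum_mul]
              refine Finset.sum_congr rfl fun p _ => by ring
      rw [← e1, e2]
    have := key k₁
    exact mul_right_cancel₀ (hR k₁).ne' this
  · -- normalization
    have key : ∀ k : ι, R k = (∑ i : ι, (A.one i : ℝ) * d i) * R k := by
      intro k
      have e1 : ∀ j : ι, ((A.mul A.one (Finsupp.single j 1)) k : ℝ)
          = ∑ i : ι, (A.one i : ℝ) * Nr i j k := by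
        intro j
        rw [A.coeff_mul_single_right]
        push_cast
        rfl
      have e2 : R k = ∑ j : ι, ((A.mul A.one (Finsupp.single j 1)) k : ℝ) * R j := by
        simp only [A.one_mul]
        have hterm : ∀ j : ι, (((Finsupp.single j 1 : ι →₀ ℕ) k : ℕ) : ℝ) * R j
            = if j = k then R j else 0 := by
          intro j
          rw [Finsupp.single_apply]
          split <;> simp
        rw [Finset.sum_congr rfl fun j _ => hterm j,
          Finset.sum_ite_eq' Finset.univ k (fun j => R j)]
        simp
      calc R k = ∑ j : ι, ((A.mul A.one (Finsupp.single j 1)) k : ℝ) * R j := e2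
        _ = ∑ j : ι, (∑ i : ι, (A.one i : ℝ) * Nr i j k) * R j := by
            refine Finset.sum_congr rfl fun j _ => by rw [e1 j]
        _ = ∑ i : ι, (A.one i : ℝ) * (∑ j : ι, Nr i j k * R j) := by
            simp only [Finset.sum_mul, Finset.mul_sum]
            rw [Finset.sum_comm]
            refine Finset.sum_congr rfl fun i _ => ?_
            refine Finset.sum_congr rfl fun j _ => by ring
        _ = ∑ i : ι, (A.one i : ℝ) * (d i * R k) := by
            refine Finset.sum_congr rfl fun i _ => by rw [hdR i k]
        _ = (∑ i : ι, (A.one i : ℝ) * d i) * R k := by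
            rw [Finset.sum_mul]
            refine Finset.sum_congr rfl fun i _ => by ring
    have := key k₁
    have h2 := mul_right_cancel₀ (hR k₁).ne' (by rw [← this, one_mul] :
      (1 : ℝ) * R k₁ = (∑ i : ι, (A.one i : ℝ) * d i) * R k₁)
    exact h2.symm

end Exist
section Uniq

set_option linter.unusedSectionVars false

variable {ι : Type*} [Fintype ι] [Nonempty ι] (A : NSetAlgebra ι)

lemma char_eigen (φ : (ι →₀ ℕ) → ℝ) (hadd : ∀ a b, φ (a + b) = φ a + φ b)
    (hmul : ∀ a b, φ (A.mul a b) = φ a * φ b) (j : ι) :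
    ∑ k : ι, (∑ i : ι, (A.N i j k : ℝ)) * φ (Finsupp.single k 1)
      = (∑ i : ι, φ (Finsupp.single i 1)) * φ (Finsupp.single j 1) := by
  rw [Finset.sum_mul]
  rw [show ∑ i : ι, φ (Finsupp.single i 1) * φ (Finsupp.single j 1)
      = ∑ i : ι, ∑ k : ι, (A.N i j k : ℝ) * φ (Finsupp.single k 1) from
    Finset.sum_congr rfl fun i _ => char_rel A φ hadd hmul i j]
  rw [Finset.sum_comm]
  exact Finset.sum_congr rfl fun k _ => by rw [Finset.sum_mul]

lemma char_unique (hA : A.Transitive) (φ ψ : (ι →₀ ℕ) → ℝ)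
    (hφ : (∀ a b, φ (a + b) = φ a + φ b) ∧ (∀ a b, φ (A.mul a b) = φ a * φ b) ∧
      φ A.one = 1 ∧ (∀ i : ι, 0 ≤ φ (Finsupp.single i 1)))
    (hψ : (∀ a b, ψ (a + b) = ψ a + ψ b) ∧ (∀ a b, ψ (A.mul a b) = ψ a * ψ b) ∧
      ψ A.one = 1 ∧ (∀ i : ι, 0 ≤ ψ (Finsupp.single i 1))) :
    φ = ψ := by
  classical
  obtain ⟨hadd, hmul, hone, hnn⟩ := hφ
  obtain ⟨hadd', hmul', hone', hnn'⟩ := hψ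
  set d : ι → ℝ := fun k => φ (Finsupp.single k 1) with hd
  set d' : ι → ℝ := fun k => ψ (Finsupp.single k 1) with hd'
  have hdpos : ∀ k, 0 < d k := char_pos A hA φ hadd hmul hone hnn
  have hdpos' : ∀ k, 0 < d' k := char_pos A hA ψ hadd' hmul' hone' hnn'
  set L : ι → ι → ℝ := fun k j => ∑ i : ι, (A.N i j k : ℝ) with hL
  have hLpos : ∀ k j, 0 < L k j := by
    intro k j
    obtain ⟨u, hu⟩ := (hA j k).1
    have h1 : (1 : ℕ) ≤ A.N u j k := by
      have := hu k
      rwa [Finsupp.single_eq_same] at this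
    refine Finset.sum_pos' (fun i _ => Nat.cast_nonneg _) ⟨u, Finset.mem_univ u, ?_⟩
    exact_mod_cast h1
  obtain ⟨lam, v, hlam, hv, hve⟩ := perron_exists L hLpos
  -- both D and D' equal lam
  have hDeq : ∀ (e : ι → ℝ), (∀ k, 0 < e k) →
      (∀ j, ∑ k : ι, L k j * e k = (∑ i : ι, e i) * e j) → (∑ i : ι, e i) = lam := by
    intro e hepos hrel
    set D : ℝ := ∑ i : ι, e i with hD
    have hS : 0 < ∑ k : ι, e k * v k :=
      Finset.sum_pos (fun k _ => mul_pos (hepos k) (hv k)) Finset.univ_nonempty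
    have key : D * (∑ k : ι, e k * v k) = lam * (∑ k : ι, e k * v k) := by
      calc D * (∑ j : ι, e j * v j) = ∑ j : ι, (D * e j) * v j := by
            rw [Finset.mul_sum]; exact Finset.sum_congr rfl fun j _ => by ring
        _ = ∑ j : ι, (∑ k : ι, L k j * e k) * v j := by
            refine Finset.sum_congr rfl fun j _ => by rw [hrel j]
        _ = ∑ k : ι, e k * (∑ j : ι, L k j * v j) := by
            simp only [Finset.sum_mul, Finset.mul_sum]
            rw [Finset.sum_comm]
            refine Finset.sum_congr rfl fun k _ => ?_
            refine Finset.sum_congr rfl fun j _ => by ring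
        _ = ∑ k : ι, e k * (lam * v k) := by
            refine Finset.sum_congr rfl fun k _ => by rw [hve k]
        _ = lam * (∑ k : ι, e k * v k) := by
            rw [Finset.mul_sum]; exact Finset.sum_congr rfl fun k _ => by ring
    exact mul_right_cancel₀ hS.ne' key
  have hrel : ∀ j, ∑ k : ι, L k j * d k = (∑ i : ι, d i) * d j :=
    fun j => char_eigen A φ hadd hmul j
  have hrel' : ∀ j, ∑ k : ι, L k j * d' k = (∑ i : ι, d' i) * d' j :=
    fun j => char_eigen A ψ hadd' hmul' j
  have hD : (∑ i : ι, d i) = lam := hDeq d hdpos hrel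
  have hD' : (∑ i : ι, d' i) = lam := hDeq d' hdpos' hrel'
  -- geometric simplicity for the transpose
  obtain ⟨t, ht0, htd⟩ := perron_simple (P := fun k j => L j k)
    (fun k j => hLpos j k) (lam := lam) (R := d) (w := d') hdpos
    (fun k => by rw [hrel k, hD]) (fun k => (hdpos' k).le)
    (fun k => by rw [hrel' k, hD'])
  -- normalization forces t = 1
  have hn : ∑ k : ι, (A.one k : ℝ) * d k = 1 := by rw [← phi_eq φ hadd, hone]
  have hn' : ∑ k : ι, (A.one k : ℝ) * d' k = 1 := by rw [← phi_eq ψ hadd', hone']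
  have ht1 : t = 1 := by
    have : ∑ k : ι, (A.one k : ℝ) * d' k = t * ∑ k : ι, (A.one k : ℝ) * d k := by
      rw [Finset.mul_sum]
      refine Finset.sum_congr rfl fun k _ => by rw [htd k]; ring
    rw [hn, hn', mul_one] at this
    exact this.symm
  have hdd : ∀ k, d' k = d k := fun k => by rw [htd k, ht1, one_mul]
  funext a
  rw [phi_eq φ hadd a, phi_eq ψ hadd' a]
  exact Finset.sum_congr rfl fun k _ => by
    rw [show φ (Finsupp.single k 1) = d k from rfl,
      show ψ (Finsupp.single k 1) = d' k from rfl, hdd k]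

end Uniq
open NSetAlgebra in
/-- A transitive finite-rank ℕSet algebra has a unique character that is additive,
multiplicative, unital and non-negative on simple elements; moreover this unique
character is strictly positive on simple elements. -/
theorem stmt8 {ι : Type*} [Fintype ι] [Nonempty ι]
    (A : NSetAlgebra ι) (hA : A.Transitive) :
    (∃! φ : (ι →₀ ℕ) → ℝ,
      (∀ a b, φ (a + b) = φ a + φ b) ∧
      (∀ a b, φ (A.mul a b) = φ a * φ b) ∧
      φ A.one = 1 ∧
      (∀ i : ι, 0 ≤ φ (Finsupp.single i 1))) ∧
    (∀ φ : (ι →₀ ℕ) → ℝ,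
      ((∀ a b, φ (a + b) = φ a + φ b) ∧
       (∀ a b, φ (A.mul a b) = φ a * φ b) ∧
       φ A.one = 1 ∧
       (∀ i : ι, 0 ≤ φ (Finsupp.single i 1))) →
      ∀ i : ι, 0 < φ (Finsupp.single i 1)) := by
  classical
  obtain ⟨d, hd0, hdmul, hdnorm⟩ := exists_char A hA
  set φ₀ : (ι →₀ ℕ) → ℝ := fun a => ∑ k : ι, (a k : ℝ) * d k with hφ₀
  have hsingle : ∀ i : ι, φ₀ (Finsupp.single i 1) = d i := by
    intro i
    simp only [hφ₀]
    have hterm : ∀ k : ι, (((Finsupp.single i 1 : ι →₀ ℕ) k : ℕ) : ℝ) * d k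
        = if k = i then d k else 0 := by
      intro k
      rw [Finsupp.single_apply]
      split
      · rename_i h; rw [if_pos h.symm]; simp
      · rename_i h; rw [if_neg (fun h' => h h'.symm)]; simp
    rw [Finset.sum_congr rfl fun k _ => hterm k,
      Finset.sum_ite_eq' Finset.univ i (fun k => d k)]
    simp
  have hadd : ∀ a b, φ₀ (a + b) = φ₀ a + φ₀ b := by
    intro a b
    simp only [hφ₀, Finsupp.add_apply]
    rw [← Finset.sum_add_distrib]
    refine Finset.sum_congr rfl fun k _ => ?_
    push_cast
    ring
  have hmul : ∀ a b, φ₀ (A.mul a b) = φ₀ a * φ₀ b := by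
    intro a b
    simp only [hφ₀]
    calc ∑ m : ι, ((A.mul a b) m : ℝ) * d m
        = ∑ m : ι, (∑ i : ι, ∑ j : ι, (a i : ℝ) * (b j : ℝ) * (A.N i j m : ℝ)) * d m := by
          refine Finset.sum_congr rfl fun m _ => ?_
          congr 1
          have := congrArg (fun n : ℕ => (n : ℝ)) (A.coeff_mul a b m)
          push_cast at this
          exact this
      _ = ∑ m : ι, ∑ i : ι, ∑ j : ι, (a i : ℝ) * (b j : ℝ) * (A.N i j m : ℝ) * d m := by
          refine Finset.sum_congr rfl fun m _ => ?_
          rw [Finset.sum_mul]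
          refine Finset.sum_congr rfl fun i _ => ?_
          rw [Finset.sum_mul]
      _ = ∑ i : ι, ∑ m : ι, ∑ j : ι, (a i : ℝ) * (b j : ℝ) * (A.N i j m : ℝ) * d m :=
          Finset.sum_comm
      _ = ∑ i : ι, ∑ j : ι, ∑ m : ι, (a i : ℝ) * (b j : ℝ) * (A.N i j m : ℝ) * d m := by
          refine Finset.sum_congr rfl fun i _ => Finset.sum_comm
      _ = ∑ i : ι, ∑ j : ι, ((a i : ℝ) * d i) * ((b j : ℝ) * d j) := by
          refine Finset.sum_congr rfl fun i _ => Finset.sum_congr rfl fun j _ => ?_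
          calc ∑ m : ι, (a i : ℝ) * (b j : ℝ) * (A.N i j m : ℝ) * d m
              = (a i : ℝ) * (b j : ℝ) * ∑ m : ι, (A.N i j m : ℝ) * d m := by
                rw [Finset.mul_sum]
                refine Finset.sum_congr rfl fun m _ => by ring
            _ = (a i : ℝ) * (b j : ℝ) * (d i * d j) := by rw [← hdmul i j]
            _ = ((a i : ℝ) * d i) * ((b j : ℝ) * d j) := by ring
      _ = (∑ i : ι, (a i : ℝ) * d i) * (∑ j : ι, (b j : ℝ) * d j) := by
          rw [Finset.sum_mul_sum]
  have hone : φ₀ A.one = 1 := by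
    simp only [hφ₀]
    exact hdnorm
  have hnn : ∀ i : ι, 0 ≤ φ₀ (Finsupp.single i 1) := by
    intro i
    rw [hsingle i]
    exact hd0 i
  constructor
  · refine ⟨φ₀, ⟨hadd, hmul, hone, hnn⟩, ?_⟩
    intro φ' h'
    exact char_unique A hA φ' φ₀ h' ⟨hadd, hmul, hone, hnn⟩
  · intro φ h
    exact char_pos A hA φ h.1 h.2.1 h.2.2.1 h.2.2.2
end

section
/- Let A = ι →₀ ℕ be a transitive finite-rank ℕSet algebra with Frobenius–Perron character φ, and let a ∈ ι →₀ ℕ. Define the left-multiplication matrix L_a over ℝ by (L_a)_{k j} := (a * e_j)(k). Then φ(a) is an eigenvalue of L_a, and every complex eigenvalue z of L_a (viewing L_a as a complex matrix) satisfies |z| ≤ φ(a); in other words, φ(a) is the largest non-negative eigenvalue of the matrix of left multiplication by a. -/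
open Finsupp

section Aux

variable {ι : Type*} [Fintype ι]

lemma fp_zero {A : NSetAlgebra ι} {φ : (ι →₀ ℕ) → ℝ} (hφ : A.IsFPCharacter φ) :
    φ 0 = 0 := by
  have := hφ.map_add 0 0
  simp at this; linarith

lemma fp_single {A : NSetAlgebra ι} {φ : (ι →₀ ℕ) → ℝ} (hφ : A.IsFPCharacter φ)
    (k : ι) (n : ℕ) : φ (Finsupp.single k n) = n * φ (Finsupp.single k 1) := by
  induction n with
  | zero => simp [fp_zero hφ]
  | succ n ih =>
    have : (Finsupp.single k (n+1) : ι →₀ ℕ) = Finsupp.single k n + Finsupp.single k 1 := by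
      rw [← Finsupp.single_add]
    rw [this, hφ.map_add, ih]
    push_cast; ring

lemma fp_sum {A : NSetAlgebra ι} {φ : (ι →₀ ℕ) → ℝ} (hφ : A.IsFPCharacter φ)
    (b : ι →₀ ℕ) : φ b = ∑ k : ι, (b k : ℝ) * φ (Finsupp.single k 1) := by
  classical
  induction b using Finsupp.induction with
  | zero => simp [fp_zero hφ]
  | single_add i n f hif hn ih =>
    rw [hφ.map_add, ih, fp_single hφ]
    have hsingle : ∑ k : ι, ((Finsupp.single i n : ι →₀ ℕ) k : ℝ) * φ (Finsupp.single k 1)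
        = n * φ (Finsupp.single i 1) := by
      rw [Finset.sum_eq_single i]
      · simp [Finsupp.single_apply]
      · intro b _ hb; simp [Finsupp.single_apply, Ne.symm hb]
      · simp
    calc (n : ℝ) * φ (Finsupp.single i 1)
          + ∑ k : ι, (f k : ℝ) * φ (Finsupp.single k 1)
        = ∑ k : ι, (((Finsupp.single i n : ι →₀ ℕ) k : ℝ) * φ (Finsupp.single k 1)
            + (f k : ℝ) * φ (Finsupp.single k 1)) := by
          rw [Finset.sum_add_distrib, hsingle]
      _ = _ := by
          apply Finset.sum_congr rfl
          intro k _
          simp [add_mul]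

end Aux

open NSetAlgebra in
/-- `φ(a)` is an eigenvalue of the left-multiplication matrix `L_a`, and every complex
eigenvalue `z` of `L_a` satisfies `|z| ≤ φ(a)`: `φ(a)` is the largest non-negative
eigenvalue of left multiplication by `a`. -/
theorem stmt10 {ι : Type*} [Fintype ι] [Nonempty ι]
    (A : NSetAlgebra ι) (hA : A.Transitive)
    (φ : (ι →₀ ℕ) → ℝ) (hφ : A.IsFPCharacter φ) (a : ι →₀ ℕ) :
    (∃ v : ι → ℝ, v ≠ 0 ∧
      (Matrix.of fun k j : ι => ((A.mul a (Finsupp.single j 1)) k : ℝ)).mulVec v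
        = φ a • v) ∧
    (∀ z : ℂ,
      (∃ v : ι → ℂ, v ≠ 0 ∧
        ((Matrix.of fun k j : ι => ((A.mul a (Finsupp.single j 1)) k : ℝ)).map
          (fun x : ℝ => (x : ℂ))).mulVec v = z • v) →
      ‖z‖ ≤ φ a) := by
  classical
  set M : Matrix ι ι ℝ := Matrix.of fun k j : ι => ((A.mul a (Finsupp.single j 1)) k : ℝ)
    with hM
  set w : ι → ℝ := fun k => φ (Finsupp.single k 1) with hwdef
  have hwpos : ∀ k, 0 < w k := fun k => hφ.pos k
  have hcol : ∀ j : ι, ∑ k : ι, M k j * w k = φ a * w j := by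
    intro j
    have := fp_sum hφ (A.mul a (Finsupp.single j 1))
    rw [hφ.map_mul] at this
    simpa [hM, hwdef] using this.symm
  constructor
  · -- real eigenvector for φ a
    have hwne : w ≠ 0 := by
      intro h
      have h2 : w (Classical.arbitrary ι) = 0 := congrFun h _
      exact (hwpos _).ne' h2
    have hT : (M - φ a • 1).transpose.mulVec w = 0 := by
      ext j
      simp only [Matrix.mulVec, Matrix.transpose_apply, dotProduct, Matrix.sub_apply,
        Matrix.smul_apply, Matrix.one_apply, smul_eq_mul, sub_mul, Finset.sum_sub_distrib,
        dotProduct]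
      rw [hcol j]
      simp [mul_ite, Finset.sum_ite_eq']
    have hdetT : (M - φ a • 1).transpose.det = 0 :=
      Matrix.exists_mulVec_eq_zero_iff.mp ⟨w, hwne, hT⟩
    have hdet : (M - φ a • 1).det = 0 := by
      rw [← Matrix.det_transpose]; exact hdetT
    obtain ⟨v, hv, hv0⟩ := Matrix.exists_mulVec_eq_zero_iff.mpr hdet
    refine ⟨v, hv, ?_⟩
    have := hv0
    rw [Matrix.sub_mulVec, Matrix.smul_mulVec, Matrix.one_mulVec, sub_eq_zero] at this
    exact this
  · rintro z ⟨v, hv, hvz⟩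
    set S : ℝ := ∑ k : ι, w k * ‖v k‖ with hS
    have hSpos : 0 < S := by
      obtain ⟨k0, hk0⟩ := Function.ne_iff.mp hv
      refine Finset.sum_pos' (fun k _ => ?_) ⟨k0, Finset.mem_univ _, ?_⟩
      · exact mul_nonneg (hwpos k).le (norm_nonneg _)
      · exact mul_pos (hwpos k0) (norm_pos_iff.mpr hk0)
    have key : ‖z‖ * S ≤ φ a * S := by
      calc ‖z‖ * S = ∑ k : ι, w k * ‖z * v k‖ := by
            rw [hS, Finset.mul_sum]
            apply Finset.sum_congr rfl
            intro k _
            rw [norm_mul]; ring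
        _ = ∑ k : ι, w k * ‖∑ j : ι, (M k j : ℂ) * v j‖ := by
            apply Finset.sum_congr rfl
            intro k _
            have := congrFun hvz k
            simp only [Matrix.mulVec, dotProduct, Matrix.map_apply, Pi.smul_apply,
              smul_eq_mul] at this
            rw [this]
        _ ≤ ∑ k : ι, w k * ∑ j : ι, M k j * ‖v j‖ := by
            apply Finset.sum_le_sum
            intro k _
            refine mul_le_mul_of_nonneg_left ?_ (hwpos k).le
            calc ‖∑ j : ι, (M k j : ℂ) * v j‖
                ≤ ∑ j : ι, ‖(M k j : ℂ) * v j‖ :=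
                  norm_sum_le _ _
              _ = ∑ j : ι, M k j * ‖v j‖ := by
                  apply Finset.sum_congr rfl
                  intro j _
                  rw [norm_mul, Complex.norm_real, Real.norm_eq_abs, abs_of_nonneg]
                  simp [hM]
        _ = ∑ j : ι, (∑ k : ι, M k j * w k) * ‖v j‖ := by
            simp_rw [Finset.mul_sum]
            rw [Finset.sum_comm]
            apply Finset.sum_congr rfl
            intro j _
            rw [Finset.sum_mul]
            apply Finset.sum_congr rfl
            intro k _
            ring
        _ = φ a * S := by
            rw [hS, Finset.mul_sum]
            apply Finset.sum_congr rfl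
            intro j _
            rw [hcol j]
            ring
    exact le_of_mul_le_mul_right key hSpos
end
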